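/- Let p be an odd prime, 1 ≤ s,t ≤ p−1, and let A, B be subsets of Z_p with |A| = s, |B| = t. If s+1 ≤ 2t ≤ 2p−s−1, then r(A,B,B) ≤ ⌈s(4t−s)/4⌉. -/

import Mathlib

open Finset
open scoped Pointwise

section Aux
variable {p : ℕ} [NeZero p]

/-- number of `b ∈ B` with `a + b ∉ B` -/
def phiB1 (B : Finset (ZMod p)) (a : ZMod p) : ℕ := (B.filter (fun b => a + b ∉ B)).card

lemma phiB1_zero (B : Finset (ZMod p)) : phiB1 B 0 = 0 := by
  simp [phiB1, Finset.filter_eq_empty_iff]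

lemma phiB1_le_card (B : Finset (ZMod p)) (a : ZMod p) : phiB1 B a ≤ B.card :=
  Finset.card_le_card (Finset.filter_subset _ _)

lemma phiB1_le_compl (B : Finset (ZMod p)) (a : ZMod p) : phiB1 B a ≤ p - B.card := by
  have h : phiB1 B a ≤ Bᶜ.card := by
    apply Finset.card_le_card_of_injOn (fun b => a + b)
    · intro b hb
      simp only [Finset.mem_coe, Finset.mem_filter] at hb
      simpa [Finset.mem_compl] using hb.2
    · intro x _ y _ hxy
      exact add_left_cancel hxy
  simpa [Finset.card_compl, ZMod.card p] using h

lemma phiB1_add (B : Finset (ZMod p)) (a₁ a₂ : ZMod p) :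
    phiB1 B (a₁ + a₂) ≤ phiB1 B a₁ + phiB1 B a₂ := by
  classical
  have hsub : B.filter (fun b => a₁ + a₂ + b ∉ B) ⊆
      B.filter (fun b => a₂ + b ∉ B) ∪ B.filter (fun b => a₂ + b ∈ B ∧ a₁ + (a₂ + b) ∉ B) := by
    intro b hb
    simp only [Finset.mem_filter] at hb
    by_cases h : a₂ + b ∈ B
    · refine Finset.mem_union_right _ ?_
      simp only [Finset.mem_filter]
      refine ⟨hb.1, h, ?_⟩
      rw [← add_assoc]
      exact hb.2
    · exact Finset.mem_union_left _ (by simp [Finset.mem_filter, hb.1, h])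
  have h2 : (B.filter (fun b => a₂ + b ∈ B ∧ a₁ + (a₂ + b) ∉ B)).card ≤ phiB1 B a₁ := by
    apply Finset.card_le_card_of_injOn (fun b => a₂ + b)
    · intro b hb
      simp only [Finset.mem_coe, Finset.mem_filter] at hb ⊢
      exact ⟨hb.2.1, hb.2.2⟩
    · intro x _ y _ hxy
      exact add_left_cancel hxy
  calc phiB1 B (a₁ + a₂) ≤ _ := Finset.card_le_card hsub
    _ ≤ (B.filter (fun b => a₂ + b ∉ B)).card
        + (B.filter (fun b => a₂ + b ∈ B ∧ a₁ + (a₂ + b) ∉ B)).card := Finset.card_union_le _ _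
    _ ≤ phiB1 B a₂ + phiB1 B a₁ := by exact Nat.add_le_add le_rfl h2
    _ = phiB1 B a₁ + phiB1 B a₂ := Nat.add_comm _ _

lemma sum_phiB1 (B : Finset (ZMod p)) : ∑ a : ZMod p, phiB1 B a = B.card * (p - B.card) := by
  classical
  have : ∑ a : ZMod p, phiB1 B a = ∑ a : ZMod p, ∑ b ∈ B, if a + b ∉ B then 1 else 0 := by
    refine Finset.sum_congr rfl fun a _ => ?_
    rw [phiB1, Finset.card_filter]
  rw [this, Finset.sum_comm]
  have hinner : ∀ b ∈ B, (∑ a : ZMod p, if a + b ∉ B then 1 else 0) = p - B.card := by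
    intro b _
    rw [← Finset.card_filter]
    have : Finset.univ.filter (fun a : ZMod p => a + b ∉ B) = Bᶜ.image (fun c => c - b) := by
      ext a
      simp only [Finset.mem_filter, Finset.mem_univ, true_and, Finset.mem_image,
        Finset.mem_compl]
      constructor
      · intro h; exact ⟨a + b, h, by ring⟩
      · rintro ⟨c, hc, rfl⟩; simpa using hc
    rw [this, Finset.card_image_of_injective _ (sub_left_injective), Finset.card_compl,
      ZMod.card p]
  rw [Finset.sum_congr rfl hinner, Finset.sum_const, smul_eq_mul]
end Aux


section Aux2
variable {p : ℕ} [NeZero p]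

-- (dup removed)

def dB (B : Finset (ZMod p)) (x : ℕ) : ℕ :=
  (Finset.univ.filter (fun a : ZMod p => phiB1 B a ≤ x)).card

lemma dB_mono (B : Finset (ZMod p)) {x y : ℕ} (h : x ≤ y) : dB B x ≤ dB B y := by
  apply Finset.card_le_card
  intro a ha
  simp only [Finset.mem_filter, Finset.mem_univ, true_and] at ha ⊢
  omega

lemma dB_le (B : Finset (ZMod p)) (x : ℕ) : dB B x ≤ p := by
  calc dB B x ≤ (Finset.univ : Finset (ZMod p)).card := Finset.card_le_card (Finset.filter_subset _ _)
    _ = p := by rw [Finset.card_univ, ZMod.card p]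

lemma dB_eq_p (B : Finset (ZMod p)) {x : ℕ} (h : ∀ a, phiB1 B a ≤ x) : dB B x = p := by
  rw [dB, Finset.filter_true_of_mem (fun a _ => h a), Finset.card_univ, ZMod.card p]

lemma cd_dB (hp : p.Prime) (B : Finset (ZMod p))
    (hadd : ∀ a₁ a₂, phiB1 B (a₁ + a₂) ≤ phiB1 B a₁ + phiB1 B a₂) (hzero : phiB1 B 0 = 0)
    (x y : ℕ) : min p (dB B x + dB B y - 1) ≤ dB B (x + y) := by
  classical
  set Dx := Finset.univ.filter (fun a : ZMod p => phiB1 B a ≤ x) with hDx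
  set Dy := Finset.univ.filter (fun a : ZMod p => phiB1 B a ≤ y) with hDy
  have hne : ∀ z : ℕ, (Finset.univ.filter (fun a : ZMod p => phiB1 B a ≤ z)).Nonempty := by
    intro z
    exact ⟨0, by simp [hzero]⟩
  have hsubset : Dx + Dy ⊆ Finset.univ.filter (fun a : ZMod p => phiB1 B a ≤ x + y) := by
    intro z hz
    rw [Finset.mem_add] at hz
    obtain ⟨u, hu, v, hv, rfl⟩ := hz
    simp only [hDx, hDy, Finset.mem_filter, Finset.mem_univ, true_and] at hu hv ⊢
    calc phiB1 B (u + v) ≤ phiB1 B u + phiB1 B v := hadd u v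
      _ ≤ x + y := Nat.add_le_add hu hv
  calc min p (dB B x + dB B y - 1) ≤ (Dx + Dy).card :=
        ZMod.cauchy_davenport hp (hne x) (hne y)
    _ ≤ dB B (x + y) := Finset.card_le_card hsubset

noncomputable def psiB (B : Finset (ZMod p)) (n : ℕ) : ℕ := sInf {x | n + 1 ≤ dB B x}

lemma psiB_le_iff (B : Finset (ZMod p)) {n : ℕ} (hn : n < p) (x : ℕ) :
    psiB B n ≤ x ↔ n + 1 ≤ dB B x := by
  have hne : {x | n + 1 ≤ dB B x}.Nonempty := by
    refine ⟨B.card, ?_⟩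
    have : dB B B.card = p := dB_eq_p B (fun a => by
      exact Finset.card_le_card (Finset.filter_subset _ _))
    simp only [Set.mem_setOf_eq, this]
    omega
  constructor
  · intro h
    have hmem := Nat.sInf_mem hne
    simp only [Set.mem_setOf_eq] at hmem
    exact le_trans hmem (dB_mono B h)
  · intro h
    exact Nat.sInf_le h

lemma psiB_self (B : Finset (ZMod p)) {n : ℕ} (hn : n < p) : n + 1 ≤ dB B (psiB B n) :=
  (psiB_le_iff B hn _).1 le_rfl

lemma psiB_subadd (hp : p.Prime) (B : Finset (ZMod p))
    (hadd : ∀ a₁ a₂, phiB1 B (a₁ + a₂) ≤ phiB1 B a₁ + phiB1 B a₂) (hzero : phiB1 B 0 = 0)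
    {m n : ℕ} (hmn : m + n < p) :
    psiB B (m + n) ≤ psiB B m + psiB B n := by
  rw [psiB_le_iff B hmn]
  have h1 := psiB_self B (show m < p by omega)
  have h2 := psiB_self B (show n < p by omega)
  have := cd_dB hp B hadd hzero (psiB B m) (psiB B n)
  have hmin : min p (m + n + 1) ≤ min p (dB B (psiB B m) + dB B (psiB B n) - 1) :=
    min_le_min le_rfl (by omega)
  have hpe : min p (m + n + 1) = m + n + 1 := min_eq_right (by omega)
  omega

lemma psiB_le_M (B : Finset (ZMod p)) {n : ℕ} (hn : n < p)
    (hM : ∀ a, phiB1 B a ≤ min B.card (p - B.card)) :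
    psiB B n ≤ min B.card (p - B.card) := by
  rw [psiB_le_iff B hn, dB_eq_p B hM]
  omega
end Aux2


lemma arith_sq (n : ℕ) : n*n/4 + (n+1)/2 = (n+1)*(n+1)/4 := by
  rcases Nat.even_or_odd n with ⟨k, hk⟩ | ⟨k, hk⟩ <;> subst hk
  · have e1 : (k+k)*(k+k) = 4*(k*k) := by ring
    have e2 : (k+k+1)*(k+k+1) = 4*(k*k+k)+1 := by ring
    rw [e1, e2]
    have e3 : ∀ K : ℕ, 4*K/4 = K := fun K => by omega
    have e4 : ∀ K : ℕ, (4*K+1)/4 = K := fun K => by omega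
    rw [e3, e4]
    omega
  · have e1 : (2*k+1)*(2*k+1) = 4*(k*k+k)+1 := by ring
    have e2 : (2*k+1+1)*(2*k+1+1) = 4*((k+1)*(k+1)) := by ring
    rw [e1, e2]
    have e3 : ∀ K : ℕ, 4*K/4 = K := fun K => by omega
    have e4 : ∀ K : ℕ, (4*K+1)/4 = K := fun K => by omega
    rw [e3, e4]
    have : (k+1)*(k+1) = k*k + 2*k + 1 := by ring
    omega

lemma arith1 (n : ℕ) (h1 : 1 ≤ n) : 2*(n*n/4) ≤ (n-1)*((n+1)/2+1) := by
  rcases Nat.even_or_odd n with ⟨k, hk⟩ | ⟨k, hk⟩ <;> subst hk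
  · obtain ⟨j, rfl⟩ : ∃ j, k = 1 + j := ⟨k-1, by omega⟩
    have e1 : ((1+j)+(1+j))*((1+j)+(1+j)) = 4*((1+j)*(1+j)) := by ring
    rw [e1]
    have e3 : ∀ K : ℕ, 4*K/4 = K := fun K => by omega
    rw [e3]
    have e4 : (1+j)+(1+j)-1 = 2*j+1 := by omega
    have e5 : ((1+j)+(1+j)+1)/2 = 1+j := by omega
    rw [e4, e5]
    nlinarith
  · have e1 : (2*k+1)*(2*k+1) = 4*(k*k+k)+1 := by ring
    rw [e1]
    have e4 : ∀ K : ℕ, (4*K+1)/4 = K := fun K => by omega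
    rw [e4]
    have e2 : 2*k+1-1 = 2*k := by omega
    have e3 : (2*k+1+1)/2 = k+1 := by omega
    rw [e2, e3]
    nlinarith

/-- generic layer cake -/
lemma layer_sum {ι : Type*} [DecidableEq ι] (s : Finset ι) (g : ι → ℕ) (M : ℕ)
    (hg : ∀ i ∈ s, g i ≤ M) :
    ∑ i ∈ s, g i = ∑ x ∈ Finset.range M, (s.filter (fun i => x < g i)).card := by
  have h1 : ∀ i ∈ s, g i = ((Finset.range M).filter (fun x => x < g i)).card := by
    intro i hi
    have hgi := hg i hi
    have : (Finset.range M).filter (fun x => x < g i) = Finset.range (g i) := by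
      ext x
      simp only [Finset.mem_filter, Finset.mem_range]
      omega
    rw [this, Finset.card_range]
  rw [Finset.sum_congr rfl h1]
  simp only [Finset.card_filter]
  rw [Finset.sum_comm]

section Seq
variable {p : ℕ} [NeZero p]

noncomputable def Qseq (B : Finset (ZMod p)) (n : ℕ) : ℕ := ∑ i ∈ Finset.range n, psiB B i

def qseq (M n : ℕ) : ℕ := ∑ i ∈ Finset.range n, min ((i+1)/2) M

lemma qseq_val (M : ℕ) : ∀ n, n ≤ 2*M → qseq M n = n*n/4 := by
  intro n
  induction n with
  | zero => intro _; simp [qseq]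
  | succ k ih =>
    intro h
    rw [qseq, Finset.sum_range_succ, ← qseq, ih (by omega),
      min_eq_left (by omega : (k+1)/2 ≤ M), arith_sq]

lemma qseq_top (M pp : ℕ) (h : 2*M ≤ pp) : qseq M pp = M*(pp-M) := by
  rw [qseq, Finset.range_eq_Ico, ← Finset.sum_Ico_consecutive _ (Nat.zero_le (2*M)) h]
  have h1 : ∑ i ∈ Finset.Ico 0 (2*M), min ((i+1)/2) M = M*M := by
    rw [← Finset.range_eq_Ico, ← qseq, qseq_val M (2*M) le_rfl]
    have e1 : (2*M)*(2*M) = 4*(M*M) := by ring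
    have e3 : ∀ K : ℕ, 4*K/4 = K := fun K => by omega
    rw [e1, e3]
  have h2 : ∑ i ∈ Finset.Ico (2*M) pp, min ((i+1)/2) M = (pp-2*M)*M := by
    rw [Finset.sum_congr rfl (fun i hi => min_eq_right ?_), Finset.sum_const, Nat.card_Ico,
      smul_eq_mul]
    have := (Finset.mem_Ico.mp hi).1
    omega
  rw [h1, h2]
  obtain ⟨j, hj⟩ := Nat.exists_eq_add_of_le h
  rw [hj]
  have e1 : 2*M+j-2*M = j := by omega
  have e2 : 2*M+j-M = M+j := by omega
  rw [e1, e2]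
  ring

lemma pairing (hp : p.Prime) (B : Finset (ZMod p)) {n : ℕ} (hn : n < p) :
    (n+1) * psiB B n ≤ 2 * Qseq B (n+1) := by
  have hrefl : ∑ i ∈ Finset.range (n+1), psiB B (n - i)
      = ∑ i ∈ Finset.range (n+1), psiB B i := by
    have := Finset.sum_range_reflect (fun i => psiB B i) (n+1)
    simpa using this
  have h2 : 2 * Qseq B (n+1)
      = ∑ i ∈ Finset.range (n+1), (psiB B i + psiB B (n - i)) := by
    rw [Finset.sum_add_distrib, hrefl, Qseq, two_mul]
  rw [h2]
  calc (n+1) * psiB B n = ∑ _i ∈ Finset.range (n+1), psiB B n := by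
        rw [Finset.sum_const, Finset.card_range, smul_eq_mul]
    _ ≤ _ := by
        refine Finset.sum_le_sum fun i hi => ?_
        have hi' : i ≤ n := by have := Finset.mem_range.mp hi; omega
        have heq : n = i + (n - i) := by omega
        calc psiB B n = psiB B (i + (n-i)) := by rw [← heq]
          _ ≤ psiB B i + psiB B (n-i) :=
              psiB_subadd hp B (phiB1_add B) (phiB1_zero B) (by omega)

end Seq
section Central
variable {p : ℕ} [NeZero p]

lemma sumA_phi_ge (hp : p.Prime) (hodd : Odd p) {s t : ℕ}
    (A B : Finset (ZMod p)) (hA : A.card = s) (hB : B.card = t)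
    (hs1 : 1 ≤ s) (ht1 : 1 ≤ t) (htp : t ≤ p - 1)
    (hst1 : s + 1 ≤ 2 * t) (hst2 : s + 1 ≤ 2 * (p - t)) :
    s * s / 4 ≤ ∑ a ∈ A, phiB1 B a := by
  classical
  set M := min t (p - t) with hMdef
  obtain ⟨kodd, hkodd⟩ := hodd
  have hp2 : 2 ≤ p := hp.two_le
  have hMor := min_cases t (p - t)
  rw [← hMdef] at hMor
  have h2M : 2 * M ≤ p - 1 := by rcases hMor with ⟨h1, h2⟩ | ⟨h1, h2⟩ <;> omega
  have hsM : s + 1 ≤ 2 * M := by rcases hMor with ⟨h1, h2⟩ | ⟨h1, h2⟩ <;> omega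
  have hsp : s < p := by omega
  have hphiM : ∀ a, phiB1 B a ≤ M :=
    fun a => le_min (hB ▸ phiB1_le_card B a) (hB ▸ phiB1_le_compl B a)
  have hψM : ∀ n, n < p → psiB B n ≤ M := by
    intro n hn
    have h := psiB_le_M B hn (by rw [hB]; exact hphiM)
    rwa [hB] at h
  have hiff : ∀ x n, n < p → (x < psiB B n ↔ dB B x ≤ n) := by
    intro x n hn
    rw [← not_le, psiB_le_iff B hn]
    omega
  -- budget
  have hQp : Qseq B p = ∑ x ∈ Finset.range M, (p - dB B x) := by
    rw [Qseq, layer_sum (Finset.range p) (psiB B) M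
      (fun n hn => hψM n (Finset.mem_range.mp hn))]
    refine Finset.sum_congr rfl fun x _ => ?_
    have hset : (Finset.range p).filter (fun n => x < psiB B n) = Finset.Ico (dB B x) p := by
      ext n
      simp only [Finset.mem_filter, Finset.mem_range, Finset.mem_Ico]
      constructor
      · rintro ⟨hnp, hx⟩
        exact ⟨(hiff x n hnp).mp hx, hnp⟩
      · rintro ⟨hd, hnp⟩
        exact ⟨hnp, (hiff x n hnp).mpr hd⟩
    rw [hset, Nat.card_Ico]
  have hphi_layer : ∑ a : ZMod p, phiB1 B a = ∑ x ∈ Finset.range M, (p - dB B x) := by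
    rw [layer_sum Finset.univ (phiB1 B) M (fun a _ => hphiM a)]
    refine Finset.sum_congr rfl fun x _ => ?_
    have hsplit := Finset.card_filter_add_card_filter_not
      (s := (Finset.univ : Finset (ZMod p))) (p := fun a => phiB1 B a ≤ x)
    have hfe : Finset.univ.filter (fun a : ZMod p => x < phiB1 B a)
        = Finset.univ.filter (fun a : ZMod p => ¬ phiB1 B a ≤ x) :=
      Finset.filter_congr fun a _ => by omega
    have hcardu : (Finset.univ : Finset (ZMod p)).card = p := by
      rw [Finset.card_univ, ZMod.card p]
    rw [hfe]
    have hdle := dB_le B x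
    rw [hcardu] at hsplit
    have : dB B x = (Finset.univ.filter (fun a : ZMod p => phiB1 B a ≤ x)).card := rfl
    omega
  have hbudget : Qseq B p = M * (p - M) := by
    have htpt : t * (p - t) = M * (p - M) := by
      rcases hMor with ⟨h1, h2⟩ | ⟨h1, h2⟩
      · rw [h1]
      · rw [h1]
        have he : p - (p - t) = t := by omega
        rw [he, mul_comm]
    rw [hQp, ← hphi_layer, sum_phiB1, hB]
    exact htpt
  -- descent
  have hdesc : ∀ m n, n + m = p → s ≤ n → qseq M n ≤ Qseq B n := by
    intro m
    induction m with
    | zero =>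
      intro n hn _
      have hnp : n = p := by omega
      subst hnp
      rw [hbudget, qseq_top M n (by omega)]
    | succ m ih =>
      intro n hn hs
      have hnp : n < p := by omega
      have ihn := ih (n+1) (by omega) (by omega)
      have hQs : Qseq B (n+1) = Qseq B n + psiB B n := Finset.sum_range_succ _ _
      have hqs : qseq M (n+1) = qseq M n + min ((n+1)/2) M := Finset.sum_range_succ _ _
      by_cases hc : psiB B n ≤ min ((n+1)/2) M
      · omega
      · push_neg at hc
        by_cases h2 : 2*M ≤ n+1
        · rw [min_eq_right (by omega : M ≤ (n+1)/2)] at hc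
          have := hψM n hnp
          omega
        · have hwn : min ((n+1)/2) M = (n+1)/2 := min_eq_left (by omega)
          rw [hwn] at hc
          have hpair := pairing hp B hnp
          have hexp : (n+1) * psiB B n = (n-1) * psiB B n + 2 * psiB B n := by
            have h1 : n+1 = (n-1)+2 := by omega
            rw [h1, Nat.add_mul]
          have hstep : (n-1) * psiB B n ≤ 2 * Qseq B n := by
            have h3 : (n-1)*psiB B n + 2*psiB B n ≤ 2*Qseq B n + 2*psiB B n := by
              rw [← hexp]
              calc (n+1)*psiB B n ≤ 2*Qseq B (n+1) := hpair
                _ = 2*Qseq B n + 2*psiB B n := by rw [hQs]; ring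
            omega
          have harith : 2 * qseq M n ≤ (n-1) * ((n+1)/2 + 1) := by
            rw [qseq_val M n (by omega)]
            exact arith1 n (by omega)
          have hmul : (n-1) * ((n+1)/2 + 1) ≤ (n-1) * psiB B n :=
            Nat.mul_le_mul_left _ (by omega)
          omega
  -- Q at s equals the level sum
  have hQsS : Qseq B s = ∑ x ∈ Finset.range M, (s - dB B x) := by
    rw [Qseq, layer_sum (Finset.range s) (psiB B) M
      (fun n hn => hψM n (by have := Finset.mem_range.mp hn; omega))]
    refine Finset.sum_congr rfl fun x _ => ?_
    have hset : (Finset.range s).filter (fun n => x < psiB B n) = Finset.Ico (dB B x) s := by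
      ext n
      simp only [Finset.mem_filter, Finset.mem_range, Finset.mem_Ico]
      constructor
      · rintro ⟨hns, hx⟩
        exact ⟨(hiff x n (by omega)).mp hx, hns⟩
      · rintro ⟨hd, hns⟩
        exact ⟨hns, (hiff x n (by omega)).mpr hd⟩
    rw [hset, Nat.card_Ico]
  -- A sum dominates level sum
  have hAsum : ∑ x ∈ Finset.range M, (s - dB B x) ≤ ∑ a ∈ A, phiB1 B a := by
    rw [layer_sum A (phiB1 B) M (fun a _ => hphiM a)]
    refine Finset.sum_le_sum fun x _ => ?_
    have hsplit := Finset.card_filter_add_card_filter_not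
      (s := A) (p := fun a => phiB1 B a ≤ x)
    have hsub : (A.filter (fun a => phiB1 B a ≤ x)).card ≤ dB B x := by
      apply Finset.card_le_card
      intro a ha
      simp only [dB ,Finset.mem_filter, Finset.mem_univ, true_and]
      exact (Finset.mem_filter.mp ha).2
    have hfe : A.filter (fun a => x < phiB1 B a) = A.filter (fun a => ¬ phiB1 B a ≤ x) :=
      Finset.filter_congr fun a _ => by omega
    rw [hfe]
    omega
  calc s*s/4 = qseq M s := (qseq_val M s (by omega)).symm
    _ ≤ Qseq B s := hdesc (p - s) s (by omega) le_rfl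
    _ = ∑ x ∈ Finset.range M, (s - dB B x) := hQsS
    _ ≤ ∑ a ∈ A, phiB1 B a := hAsum

end Central
theorem stmt_8 {p : ℕ} [NeZero p] (hp : p.Prime) (hodd : Odd p) {s t : ℕ}
    (hs1 : 1 ≤ s) (hs2 : s ≤ p - 1) (ht1 : 1 ≤ t) (ht2 : t ≤ p - 1)
    (A B : Finset (ZMod p)) (hA : A.card = s) (hB : B.card = t)
    (h1 : (s : ℤ) + 1 ≤ 2 * t) (h2 : 2 * (t : ℤ) ≤ 2 * p - s - 1) :
    (((A ×ˢ B ×ˢ B).filter (fun x => x.2.2 = x.1 + x.2.1)).card : ℤ)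
      ≤ ((s : ℤ) * (4 * t - s) + 3) / 4 := by
  classical
  have hp2 : 2 ≤ p := hp.two_le
  have htp : t < p := by omega
  have hst1 : s + 1 ≤ 2 * t := by exact_mod_cast h1
  have hst2 : s + 1 ≤ 2 * (p - t) := by zify [htp.le]; omega
  set N := ((A ×ˢ B ×ˢ B).filter (fun x => x.2.2 = x.1 + x.2.1)).card with hN
  have hfib : N = ∑ a ∈ A, (B.filter (fun b => a + b ∈ B)).card := by
    rw [hN, Finset.card_eq_sum_card_fiberwise
      (f := fun x : ZMod p × ZMod p × ZMod p => x.1) (t := A)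
      (fun x hx => by
        simp only [Finset.mem_coe, Finset.mem_filter, Finset.mem_product] at hx
        exact hx.1.1)]
    refine Finset.sum_congr rfl fun a ha => ?_
    apply Finset.card_bij' (fun x _ => x.2.1) (fun b _ => (a, b, a + b))
    · intro x hx
      simp only [Finset.mem_filter, Finset.mem_product] at hx
      obtain ⟨⟨⟨hxA, hxB1, hxB2⟩, hxeq⟩, hxa⟩ := hx
      simp only [Finset.mem_filter]
      refine ⟨hxB1, ?_⟩
      rw [← hxa, ← hxeq]
      exact hxB2
    · intro b hb
      simp only [Finset.mem_filter] at hb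
      simp [Finset.mem_filter, Finset.mem_product, ha, hb.1, hb.2]
    · intro x hx
      simp only [Finset.mem_filter, Finset.mem_product] at hx
      obtain ⟨⟨⟨hxA, hxB1, hxB2⟩, hxeq⟩, hxa⟩ := hx
      obtain ⟨x1, x2, x3⟩ := x
      simp only at hxeq hxa ⊢
      rw [hxeq, hxa]
    · intro b hb
      rfl
  have hsum2 : ∀ a ∈ A, (B.filter (fun b => a + b ∈ B)).card + phiB1 B a = t := by
    intro a _
    have h := Finset.card_filter_add_card_filter_not
      (s := B) (p := fun b => a + b ∈ B)
    rw [hB] at h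
    exact h
  have hNsum : N + ∑ a ∈ A, phiB1 B a = s * t := by
    rw [hfib, ← Finset.sum_add_distrib, Finset.sum_congr rfl hsum2, Finset.sum_const, hA,
      smul_eq_mul]
  have hkey : s * s / 4 ≤ ∑ a ∈ A, phiB1 B a :=
    sumA_phi_ge hp hodd A B hA hB hs1 ht1 ht2 hst1 hst2
  rw [Int.le_ediv_iff_mul_le (by norm_num : (0:ℤ) < 4)]
  have h4 : ∀ S : ℕ, S ≤ 4*(S/4)+3 := fun S => by omega
  have h4' := h4 (s*s)
  have hZ : (N : ℤ) + ((∑ a ∈ A, phiB1 B a : ℕ) : ℤ) = (s:ℤ) * t := by exact_mod_cast hNsum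
  have hkeyZ : ((s*s/4 : ℕ) : ℤ) ≤ ((∑ a ∈ A, phiB1 B a : ℕ) : ℤ) := by exact_mod_cast hkey
  have h4Z : (s:ℤ) * s ≤ 4*((s*s/4 : ℕ) : ℤ) + 3 := by exact_mod_cast h4'
  nlinarith [hZ, hkeyZ, h4Z]
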